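/- Let G be a θ(1,2,2)-free simple graph on n vertices, let u be a vertex of G with d(u) ≥ 1, and let t be the number of edges of the subgraph of G induced by N(u). Then d(u) + (1/d(u)) · Σ_{w ∈ N(u)} d(w) ≤ n − t·(n − 3 − d(u))/d(u); equivalently, Σ_{w ∈ N(u)} d(w) ≤ d(u) + 2t + (d(u) − t)(n − 1 − d(u)). -/

import Mathlib

open SimpleGraph Finset

/-- The signless Laplacian spectral radius of a graph: the largest real eigenvalue
(root of the characteristic polynomial) of `Q(G) = D(G) + A(G)`. -/
noncomputable def qrad {n : ℕ} (G : SimpleGraph (Fin n)) : ℝ :=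
  letI := Classical.decRel G.Adj
  sSup {x : ℝ | (Matrix.charpoly (G.degMatrix ℝ + G.adjMatrix ℝ)).IsRoot x}

/-- `contains H G` : `G` contains a subgraph isomorphic to `H`. -/
def contains {α β : Type*} (H : SimpleGraph α) (G : SimpleGraph β) : Prop :=
  ∃ f : α → β, Function.Injective f ∧ ∀ a b, H.Adj a b → G.Adj (f a) (f b)

/-- The theta graph θ(1,2,2) (= K₄ minus an edge). -/
def theta122 : SimpleGraph (Fin 4) :=
  SimpleGraph.fromEdgeSet {s(0,1), s(0,2), s(1,2), s(0,3), s(1,3)}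

/-- The theta graph θ(1,2,3). -/
def theta123 : SimpleGraph (Fin 5) :=
  SimpleGraph.fromEdgeSet {s(0,1), s(0,2), s(2,1), s(0,3), s(3,4), s(4,1)}

/-- The friendship graph `F n`: center `0`; the other vertices are paired up
`{1,2}, {3,4}, …` into triangles through the center, with a pendant vertex left
over when `n` is even. -/
def friendship (n : ℕ) : SimpleGraph (Fin n) :=
  SimpleGraph.fromRel (fun i j => i.val = 0 ∨ (i.val + 1) / 2 = (j.val + 1) / 2)

/-- `Sgraph n k` = `S_{n,k}`, the join of `K_k` with `n - k` isolated vertices. -/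
def Sgraph (n k : ℕ) : SimpleGraph (Fin n) :=
  SimpleGraph.fromRel (fun i _ => i.val < k)

/-- `Splus n` = `S_{n,1}⁺`, the star `K_{1,n-1}` plus one edge between two leaves. -/
def Splus (n : ℕ) : SimpleGraph (Fin n) :=
  SimpleGraph.fromRel (fun i j => i.val = 0 ∨ (i.val = 1 ∧ j.val = 2))

/-- `K₁ ∨ ((n-1)/3) K₃` : vertex `0` joined to `(n-1)/3` disjoint triangles. -/
def joinK3s (n : ℕ) : SimpleGraph (Fin n) :=
  SimpleGraph.fromRel (fun i j => i.val = 0 ∨ (i.val - 1) / 3 = (j.val - 1) / 3)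

/-- The number of edges of `G` lying inside the vertex set `s` (the number of
edges of the induced subgraph `G[s]`). -/
noncomputable def edgesIn {V : Type*} (G : SimpleGraph V) (s : Set V) : ℕ :=
  {e | e ∈ G.edgeSet ∧ ∀ v ∈ e, v ∈ s}.ncard

lemma common_nbr_unique {n : ℕ} (G : SimpleGraph (Fin n))
    (hfree : ¬ contains theta122 G) {a b c e : Fin n}
    (hab : G.Adj a b) (hac : G.Adj a c) (hbc : G.Adj b c)
    (hae : G.Adj a e) (hbe : G.Adj b e) : c = e := by
  by_contra hne
  apply hfree
  refine ⟨![a,b,c,e], ?_, ?_⟩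
  · have h1 := hab.ne
    have h2 := hac.ne
    have h3 := hbc.ne
    have h4 := hae.ne
    have h5 := hbe.ne
    intro i j h
    fin_cases i <;> fin_cases j <;> simp_all
  · intro i j h
    fin_cases i <;> fin_cases j <;>
      simp only [theta122, fromEdgeSet_adj, Set.mem_insert_iff, Set.mem_singleton_iff,
        Sym2.eq, Sym2.rel_iff', Prod.mk.injEq, Prod.swap_prod_mk, ne_eq] at h <;>
      simp_all [G.adj_comm]

def inN {n : ℕ} (G : SimpleGraph (Fin n)) (N : Finset (Fin n)) : SimpleGraph (Fin n) where
  Adj a b := G.Adj a b ∧ a ∈ N ∧ b ∈ N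
  symm := ⟨fun a b h => ⟨h.1.symm, h.2.2, h.2.1⟩⟩
  loopless := ⟨fun a h => G.irrefl h.1⟩

instance {n : ℕ} (G : SimpleGraph (Fin n)) [DecidableRel G.Adj] (N : Finset (Fin n)) :
    DecidableRel (inN G N).Adj := fun a b => inferInstanceAs (Decidable (G.Adj a b ∧ a ∈ N ∧ b ∈ N))

lemma edgesIn_eq {n : ℕ} (G : SimpleGraph (Fin n)) [DecidableRel G.Adj] (N : Finset (Fin n)) :
    edgesIn G ↑N = (inN G N).edgeFinset.card := by
  rw [edgesIn, ← Set.ncard_coe_finset, coe_edgeFinset]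
  congr 1
  ext e
  induction e with
  | _ a b =>
    simp only [Set.mem_setOf_eq, mem_edgeSet, Sym2.mem_iff, inN]
    constructor
    · rintro ⟨h, hv⟩
      exact ⟨h, hv a (Or.inl rfl), hv b (Or.inr rfl)⟩
    · rintro ⟨h, ha, hb⟩
      exact ⟨h, fun v hv => by rcases hv with rfl | rfl <;> assumption⟩

lemma sum_inter_eq {n : ℕ} (G : SimpleGraph (Fin n)) [DecidableRel G.Adj] (N : Finset (Fin n)) :
    ∑ w ∈ N, (G.neighborFinset w ∩ N).card = 2 * (inN G N).edgeFinset.card := by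
  rw [← sum_degrees_eq_twice_card_edges]
  rw [← Finset.sum_subset (Finset.subset_univ N) (fun x _ hx => ?_)]
  · apply Finset.sum_congr rfl
    intro w hw
    have hset : (inN G N).neighborFinset w = G.neighborFinset w ∩ N := by
      ext x
      rw [mem_neighborFinset]
      simp only [mem_neighborFinset, mem_inter, inN]
      tauto
    rw [degree, hset]
  · rw [degree, Finset.card_eq_zero]
    ext y
    rw [mem_neighborFinset]
    simp only [mem_neighborFinset, inN, Finset.notMem_empty, iff_false]
    tauto

lemma main_nat {n : ℕ} (G : SimpleGraph (Fin n)) [DecidableRel G.Adj]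
    (hfree : ¬ contains theta122 G) (u : Fin n) :
    2 * edgesIn G (G.neighborSet u) ≤ G.degree u ∧ G.degree u + 1 ≤ n ∧
    ∑ w ∈ G.neighborFinset u, G.degree w
        + edgesIn G (G.neighborSet u) * (n - 1 - G.degree u)
      ≤ G.degree u + 2 * edgesIn G (G.neighborSet u)
        + G.degree u * (n - 1 - G.degree u) := by
  classical
  set N := G.neighborFinset u with hN
  have hNset : G.neighborSet u = ↑N := by rw [hN, neighborFinset_def, Set.coe_toFinset]
  rw [show edgesIn G (G.neighborSet u) = edgesIn G ↑N by rw [hNset], edgesIn_eq]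
  set t := (inN G N).edgeFinset.card with ht
  have hdeg : G.degree u = N.card := rfl
  have hsum_c : ∑ w ∈ N, (G.neighborFinset w ∩ N).card = 2 * t := sum_inter_eq G N
  have huN : u ∉ N := by simp [hN]
  have hone : ∀ w ∈ N, (G.neighborFinset w ∩ N).card ≤ 1 := by
    intro w hw
    apply Finset.card_le_one.mpr
    intro x hx y hy
    rw [Finset.mem_inter, mem_neighborFinset] at hx hy
    rw [hN, mem_neighborFinset] at *
    exact common_nbr_unique G hfree hw hx.2 hx.1 hy.2 hy.1
  set M := N.filter (fun w => (G.neighborFinset w ∩ N).card ≠ 0) with hM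
  have hMcard : M.card = 2 * t := by
    rw [← hsum_c, hM, Finset.card_filter]
    refine Finset.sum_congr rfl fun w hw => ?_
    have := hone w hw
    split_ifs with h <;> omega
  have hMsub : M ⊆ N := Finset.filter_subset _ _
  have hMiff : ∀ w, w ∈ M ↔ w ∈ N ∧ (G.neighborFinset w ∩ N).Nonempty := by
    intro w
    rw [hM, Finset.mem_filter, Finset.nonempty_iff_ne_empty]
    constructor
    · rintro ⟨h1, h2⟩
      exact ⟨h1, fun he => h2 (by rw [he, Finset.card_empty])⟩
    · rintro ⟨h1, h2⟩
      exact ⟨h1, fun hc => h2 (Finset.card_eq_zero.mp hc)⟩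
  set μ : Fin n → Fin n :=
    fun w => if h : (G.neighborFinset w ∩ N).Nonempty then h.choose else w with hμ
  have hμmem : ∀ w, (G.neighborFinset w ∩ N).Nonempty → μ w ∈ G.neighborFinset w ∩ N := by
    intro w h
    simp only [hμ, dif_pos h]
    exact h.choose_spec
  have hμuniq : ∀ w ∈ N, ∀ x ∈ G.neighborFinset w ∩ N, μ w = x := by
    intro w hw x hx
    exact Finset.card_le_one.mp (hone w hw) _ (hμmem w ⟨x, hx⟩) _ hx
  have hμM : ∀ w ∈ M, μ w ∈ M := by
    intro w hw
    obtain ⟨hwN, hne⟩ := (hMiff w).mp hw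
    have hmem := Finset.mem_inter.mp (hμmem w hne)
    rw [hMiff]
    refine ⟨hmem.2, ⟨w, Finset.mem_inter.mpr ⟨?_, hwN⟩⟩⟩
    rw [mem_neighborFinset]
    exact ((mem_neighborFinset _ _ _).mp hmem.1).symm
  have hμμ : ∀ w ∈ M, μ (μ w) = w := by
    intro w hw
    obtain ⟨hwN, hne⟩ := (hMiff w).mp hw
    have hmem := Finset.mem_inter.mp (hμmem w hne)
    apply hμuniq (μ w) hmem.2
    rw [Finset.mem_inter, mem_neighborFinset]
    exact ⟨((mem_neighborFinset _ _ _).mp hmem.1).symm, hwN⟩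
  -- the per-vertex bound
  have hbound : ∀ x, x ∉ N → x ≠ u → (G.neighborFinset x ∩ N).card + t ≤ N.card := by
    intro x hxN hxu
    set S := G.neighborFinset x ∩ N with hS
    have hSsub : S ⊆ N := Finset.inter_subset_right
    have hkey : ∀ w ∈ S ∩ M, μ w ∈ M \ S := by
      intro w hw
      rw [Finset.mem_inter] at hw
      obtain ⟨hwS, hwM⟩ := hw
      obtain ⟨hwN, hne⟩ := (hMiff w).mp hwM
      have hmem := Finset.mem_inter.mp (hμmem w hne)
      have hadj : G.Adj w (μ w) := (mem_neighborFinset _ _ _).mp hmem.1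
      rw [Finset.mem_sdiff]
      refine ⟨hμM w hwM, fun hμS => ?_⟩
      rw [hS, Finset.mem_inter, mem_neighborFinset] at hwS hμS
      have h1 : G.Adj u w := by rw [hN, mem_neighborFinset] at hwN; exact hwN
      have h2 : G.Adj u (μ w) := by
        have := hmem.2; rw [hN, mem_neighborFinset] at this; exact this
      exact hxu (common_nbr_unique G hfree hadj h1.symm h2.symm hwS.1.symm hμS.1.symm).symm
    have hinj : Set.InjOn μ ↑(S ∩ M) := by
      intro a ha b hb hab2
      rw [Finset.mem_coe, Finset.mem_inter] at ha hb
      have := congrArg μ hab2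
      rwa [hμμ a ha.2, hμμ b hb.2] at this
    have h1 : (S ∩ M).card ≤ (M \ S).card := Finset.card_le_card_of_injOn μ hkey hinj
    have h2 : (M \ S).card + (M ∩ S).card = M.card := by
      rw [add_comm]
      exact Finset.card_inter_add_card_sdiff M S
    have h3 : (S \ M).card + M.card ≤ N.card := by
      have hsub2 : S \ M ∪ M ⊆ N := Finset.union_subset (Finset.sdiff_subset.trans hSsub) hMsub
      calc (S \ M).card + M.card = (S \ M ∪ M).card :=
            (Finset.card_union_of_disjoint Finset.sdiff_disjoint).symm
        _ ≤ N.card := Finset.card_le_card hsub2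
    have h4 : (S ∩ M).card + (S \ M).card = S.card := Finset.card_inter_add_card_sdiff S M
    have h5 : (S ∩ M).card = (M ∩ S).card := by rw [Finset.inter_comm]
    omega
  -- degree decomposition
  have hdecomp : ∀ w ∈ N, G.degree w
      = 1 + (G.neighborFinset w ∩ N).card + (G.neighborFinset w \ insert u N).card := by
    intro w hw
    have hadj : G.Adj w u := by rw [hN, mem_neighborFinset] at hw; exact hw.symm
    have h0 : G.neighborFinset w ∩ insert u N = insert u (G.neighborFinset w ∩ N) := by
      ext x
      simp only [Finset.mem_inter, Finset.mem_insert, mem_neighborFinset]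
      constructor
      · rintro ⟨h, (rfl | hxN)⟩
        · exact Or.inl rfl
        · exact Or.inr ⟨h, hxN⟩
      · rintro (rfl | ⟨h, hxN⟩)
        · exact ⟨hadj, Or.inl rfl⟩
        · exact ⟨h, Or.inr hxN⟩
    have h1 : u ∉ G.neighborFinset w ∩ N := fun h => huN (Finset.mem_inter.mp h).2
    have h2 := Finset.card_inter_add_card_sdiff (G.neighborFinset w) (insert u N)
    have h3 : (G.neighborFinset w ∩ insert u N).card = (G.neighborFinset w ∩ N).card + 1 := by
      rw [h0, Finset.card_insert_of_notMem h1]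
    have h4 : G.degree w = (G.neighborFinset w).card := rfl
    omega
  -- double counting
  have hdouble : ∑ w ∈ N, (G.neighborFinset w \ insert u N).card
      = ∑ x ∈ univ \ insert u N, (G.neighborFinset x ∩ N).card := by
    have h1 : ∀ w, G.neighborFinset w \ insert u N
        = (univ \ insert u N).filter (fun x => G.Adj w x) := by
      intro w; ext x
      simp only [Finset.mem_sdiff, Finset.mem_filter, mem_neighborFinset, Finset.mem_univ,
        true_and]
      tauto
    have h2 : ∀ x, G.neighborFinset x ∩ N = N.filter (fun w => G.Adj w x) := by
      intro x; ext w
      simp only [Finset.mem_inter, Finset.mem_filter, mem_neighborFinset]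
      rw [G.adj_comm]
      tauto
    simp only [h1, h2, Finset.card_filter]
    rw [Finset.sum_comm]
  have hOut : (univ \ insert u N).card = n - (N.card + 1) := by
    rw [Finset.card_sdiff_of_subset (Finset.subset_univ _), Finset.card_univ, Fintype.card_fin,
      Finset.card_insert_of_notMem huN]
  have hdn : N.card + 1 ≤ n := by
    have := Finset.card_le_univ (insert u N)
    rwa [Finset.card_insert_of_notMem huN, Fintype.card_fin] at this
  have hsum_out : ∑ x ∈ univ \ insert u N, (G.neighborFinset x ∩ N).card
      + (univ \ insert u N).card * t ≤ (univ \ insert u N).card * N.card := by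
    have hle : ∑ x ∈ univ \ insert u N, ((G.neighborFinset x ∩ N).card + t)
        ≤ ∑ _x ∈ univ \ insert u N, N.card := by
      refine Finset.sum_le_sum fun x hx => ?_
      rw [Finset.mem_sdiff, Finset.mem_insert] at hx
      push_neg at hx
      exact hbound x hx.2.2 hx.2.1
    rw [Finset.sum_add_distrib, Finset.sum_const, smul_eq_mul] at hle
    rwa [Finset.sum_const, smul_eq_mul] at hle
  have htotal : ∑ w ∈ N, G.degree w
      = N.card + 2 * t + ∑ x ∈ univ \ insert u N, (G.neighborFinset x ∩ N).card := by
    rw [← hdouble, Finset.sum_congr rfl hdecomp, Finset.sum_add_distrib,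
      Finset.sum_add_distrib, Finset.sum_const, smul_eq_mul, mul_one, hsum_c]
  have h2t : 2 * t ≤ N.card := hMcard ▸ Finset.card_le_card hMsub
  rw [hdeg]
  refine ⟨by omega, hdn, ?_⟩
  have hK : n - 1 - N.card = (univ \ insert u N).card := by omega
  rw [hK, htotal]
  have hcomm : (univ \ insert u N).card * t = t * (univ \ insert u N).card := mul_comm _ _
  have hcomm2 : (univ \ insert u N).card * N.card = N.card * (univ \ insert u N).card :=
    mul_comm _ _
  linarith [hsum_out]


/-- In a θ(1,2,2)-free graph on `n` vertices, for a vertex `u` of degree at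
least 1, with `t` the number of edges in `G[N(u)]`:
`d(u) + (1/d(u)) ∑_{w ∈ N(u)} d(w) ≤ n − t (n − 3 − d(u)) / d(u)`; equivalently
`∑_{w ∈ N(u)} d(w) ≤ d(u) + 2t + (d(u) − t)(n − 1 − d(u))`. -/
theorem stmt14 (n : ℕ) (G : SimpleGraph (Fin n)) [DecidableRel G.Adj]
    (hfree : ¬ contains theta122 G) (u : Fin n) (hd : 1 ≤ G.degree u) :
    (G.degree u : ℝ) +
        (1 / (G.degree u : ℝ)) * ∑ w ∈ G.neighborFinset u, (G.degree w : ℝ) ≤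
      (n : ℝ) - (edgesIn G (G.neighborSet u) : ℝ) *
        ((n : ℝ) - 3 - (G.degree u : ℝ)) / (G.degree u : ℝ) ∧
    (∑ w ∈ G.neighborFinset u, (G.degree w : ℝ)) ≤
      (G.degree u : ℝ) + 2 * (edgesIn G (G.neighborSet u) : ℝ) +
        ((G.degree u : ℝ) - (edgesIn G (G.neighborSet u) : ℝ)) *
          ((n : ℝ) - 1 - (G.degree u : ℝ)) := by
  obtain ⟨h2t, hdn, hmain⟩ := main_nat G hfree u
  set d := G.degree u with hdd
  set t := edgesIn G (G.neighborSet u) with htt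
  have e1 : ((n - 1 - d : ℕ) : ℝ) = (n : ℝ) - 1 - (d : ℝ) := by
    rw [Nat.cast_sub (by omega : d ≤ n - 1), Nat.cast_sub (by omega : 1 ≤ n)]
    push_cast
    ring
  have hmainR : (∑ w ∈ G.neighborFinset u, (G.degree w : ℝ))
      + (t : ℝ) * ((n : ℝ) - 1 - (d : ℝ))
      ≤ (d : ℝ) + 2 * (t : ℝ) + (d : ℝ) * ((n : ℝ) - 1 - (d : ℝ)) := by
    have h := (Nat.cast_le (α := ℝ)).mpr hmain
    push_cast at h
    rwa [e1] at h
  have key : (∑ w ∈ G.neighborFinset u, (G.degree w : ℝ)) ≤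
      (d : ℝ) + 2 * (t : ℝ) + ((d : ℝ) - (t : ℝ)) * ((n : ℝ) - 1 - (d : ℝ)) := by
    nlinarith [hmainR]
  have hd0 : (0 : ℝ) < (d : ℝ) := by exact_mod_cast hd
  refine ⟨?_, key⟩
  calc (d : ℝ) + (1 / (d : ℝ)) * ∑ w ∈ G.neighborFinset u, (G.degree w : ℝ)
      ≤ (d : ℝ) + (1 / (d : ℝ)) *
          ((d : ℝ) + 2 * (t : ℝ) + ((d : ℝ) - (t : ℝ)) * ((n : ℝ) - 1 - (d : ℝ))) := by
        have hpos : (0 : ℝ) ≤ 1 / (d : ℝ) := by positivity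
        nlinarith [mul_le_mul_of_nonneg_left key hpos]
    _ = (n : ℝ) - (t : ℝ) * ((n : ℝ) - 3 - (d : ℝ)) / (d : ℝ) := by
        field_simp
        ring
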